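/- For every irrational real number α, the infimum over positive integers q of q · |q|₂ · ‖qα‖ is strictly positive if and only if sup_{k≥0} M(2^k α) is finite. -/

import Mathlib

open Filter

/-- Partial quotients of the continued fraction expansion: `cfA α n` is `a_n(α)`. -/
noncomputable def cfA : ℝ → ℕ → ℤ
  | α, 0 => ⌊α⌋
  | α, n + 1 => cfA (Int.fract α)⁻¹ n

/-- `M(α) = sup_{n ≥ 1} a_n(α)` as an element of `ℕ∞`. -/
noncomputable def Mq (α : ℝ) : ℕ∞ := ⨆ n : ℕ, ((cfA α (n + 1)).toNat : ℕ∞)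

/-- `B(α) = limsup_{n → ∞} a_n(α)` as an element of `ℕ∞`. -/
noncomputable def Bq (α : ℝ) : ℕ∞ := limsup (fun n => ((cfA α n).toNat : ℕ∞)) atTop

/-- Distance from a real number to the nearest integer. -/
noncomputable def nearestDist (x : ℝ) : ℝ := |x - round x|

/-- Complete quotients of the continued fraction expansion. -/
noncomputable def cq (α : ℝ) : ℕ → ℝ
  | 0 => α
  | n + 1 => (Int.fract (cq α n))⁻¹

/-- Shifted convergent numerators: `cfP α (n+1) = p_n`, `cfP α 0 = p_{-1} = 1`. -/
noncomputable def cfP (α : ℝ) : ℕ → ℤ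
  | 0 => 1
  | 1 => ⌊α⌋
  | n + 2 => cfA α (n + 1) * cfP α (n + 1) + cfP α n

/-- Shifted convergent denominators: `cfQ α (n+1) = q_n`, `cfQ α 0 = q_{-1} = 0`. -/
noncomputable def cfQ (α : ℝ) : ℕ → ℤ
  | 0 => 0
  | 1 => 1
  | n + 2 => cfA α (n + 1) * cfQ α (n + 1) + cfQ α n

/-- Two reals are equivalent if related by an integer Möbius map of determinant `±1`. -/
def CfEquiv (x y : ℝ) : Prop :=
  ∃ a b c d : ℤ, (a * d - b * c = 1 ∨ a * d - b * c = -1) ∧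
    y = ((a : ℝ) * x + b) / ((c : ℝ) * x + d)


lemma cq_succ_shift (α : ℝ) (n : ℕ) : cq α (n + 1) = cq (Int.fract α)⁻¹ n := by
  induction n with
  | zero => rfl
  | succ n ih =>
    show (Int.fract (cq α (n + 1)))⁻¹ = cq (Int.fract α)⁻¹ (n + 1)
    rw [ih]; rfl

lemma cfA_eq_floor_cq (α : ℝ) (n : ℕ) : cfA α n = ⌊cq α n⌋ := by
  induction n generalizing α with
  | zero => rfl
  | succ n ih =>
    show cfA (Int.fract α)⁻¹ n = _
    rw [ih, cq_succ_shift]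

lemma irrational_cq {α : ℝ} (hα : Irrational α) (n : ℕ) : Irrational (cq α n) := by
  induction n with
  | zero => exact hα
  | succ n ih =>
    have h : Irrational (Int.fract (cq α n)) := by
      rw [Int.fract]; exact ih.sub_intCast _
    exact h.inv

lemma fract_cq_pos {α : ℝ} (hα : Irrational α) (n : ℕ) : 0 < Int.fract (cq α n) := by
  rcases lt_or_eq_of_le (Int.fract_nonneg (cq α n)) with h | h
  · exact h
  · exfalso
    have h2 : Irrational (Int.fract (cq α n)) := by
      rw [Int.fract]; exact (irrational_cq hα n).sub_intCast _
    exact h2.ne_zero h.symm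

lemma one_lt_cq {α : ℝ} (hα : Irrational α) (n : ℕ) : 1 < cq α (n + 1) := by
  show 1 < (Int.fract (cq α n))⁻¹
  rw [one_lt_inv_iff₀]
  exact ⟨fract_cq_pos hα n, Int.fract_lt_one _⟩

lemma one_le_cfA {α : ℝ} (hα : Irrational α) (n : ℕ) : 1 ≤ cfA α (n + 1) := by
  rw [cfA_eq_floor_cq]
  exact Int.le_floor.2 (by exact_mod_cast (one_lt_cq hα n).le)

lemma cq_lt {α : ℝ} (hα : Irrational α) (n : ℕ) : cq α n < cfA α n + 1 := by
  rw [cfA_eq_floor_cq]; push_cast; exact Int.lt_floor_add_one _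

lemma cfA_lt_cq {α : ℝ} (hα : Irrational α) (n : ℕ) : (cfA α n : ℝ) < cq α n := by
  rw [cfA_eq_floor_cq]
  exact lt_of_le_of_ne (Int.floor_le _) (by
    intro h; exact (irrational_cq hα n).ne_int _ h.symm)

lemma cfQ_nonneg_and_pos {α : ℝ} (hα : Irrational α) (n : ℕ) :
    0 ≤ cfQ α n ∧ 1 ≤ cfQ α (n + 1) := by
  induction n with
  | zero => exact ⟨le_refl 0, le_refl 1⟩
  | succ n ih =>
    refine ⟨le_trans zero_le_one ih.2, ?_⟩
    show 1 ≤ cfA α (n + 1) * cfQ α (n + 1) + cfQ α n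
    nlinarith [one_le_cfA hα n, ih.1, ih.2]

lemma cfQ_nonneg {α : ℝ} (hα : Irrational α) (n : ℕ) : 0 ≤ cfQ α n :=
  (cfQ_nonneg_and_pos hα n).1

lemma cfQ_pos {α : ℝ} (hα : Irrational α) (n : ℕ) : 1 ≤ cfQ α (n + 1) :=
  (cfQ_nonneg_and_pos hα n).2

lemma cfQ_mono {α : ℝ} (hα : Irrational α) (n : ℕ) : cfQ α n ≤ cfQ α (n + 1) := by
  cases n with
  | zero => norm_num [cfQ]
  | succ n =>
    show cfQ α (n + 1) ≤ cfA α (n + 1) * cfQ α (n + 1) + cfQ α n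
    nlinarith [one_le_cfA hα n, cfQ_nonneg hα n, cfQ_pos hα n]

lemma cfQ_ge {α : ℝ} (hα : Irrational α) (n : ℕ) : (n : ℤ) ≤ cfQ α (n + 1) := by
  induction n with
  | zero => simp [cfQ]
  | succ n ih =>
    show (n : ℤ) + 1 ≤ cfA α (n + 1) * cfQ α (n + 1) + cfQ α n
    cases n with
    | zero => simpa [cfQ] using one_le_cfA hα 0
    | succ m =>
      have h1 : 1 ≤ cfQ α (m + 1) := cfQ_pos hα m
      nlinarith [one_le_cfA hα (m + 1), cfQ_pos hα (m + 1), ih]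

lemma cq_id {α : ℝ} (hα : Irrational α) (n : ℕ) :
    α * (cfQ α (n + 1) * cq α (n + 1) + cfQ α n) =
      cfP α (n + 1) * cq α (n + 1) + cfP α n := by
  induction n with
  | zero =>
    have hf : (0 : ℝ) < Int.fract α := fract_cq_pos hα 0
    have hff : (⌊α⌋ : ℝ) + Int.fract α = α := Int.floor_add_fract α
    have hu : Int.fract α * (Int.fract α)⁻¹ = 1 := mul_inv_cancel₀ hf.ne'
    simp only [cfQ, cfP, cq]
    push_cast
    linear_combination (-(Int.fract α)⁻¹) * hff + hu
  | succ n ih =>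
    have hX2 : (0 : ℝ) < cq α (n + 2) := lt_trans one_pos (one_lt_cq hα (n + 1))
    have hu : cq α (n + 2) * (cq α (n + 2))⁻¹ = 1 := mul_inv_cancel₀ hX2.ne'
    have hX1 : cq α (n + 1) = (cfA α (n + 1) : ℝ) + (cq α (n + 2))⁻¹ := by
      have : (cq α (n + 2))⁻¹ = Int.fract (cq α (n + 1)) := by
        show ((Int.fract (cq α (n + 1)))⁻¹)⁻¹ = _
        rw [inv_inv]
      rw [this, cfA_eq_floor_cq, Int.fract]; push_cast; ring
    rw [hX1] at ih
    simp only [cfQ, cfP]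
    push_cast
    linear_combination cq α (n + 2) * ih -
      (α * (cfQ α (n + 1) : ℝ) - (cfP α (n + 1) : ℝ)) * hu

lemma cf_det {α : ℝ} (n : ℕ) :
    cfP α (n + 1) * cfQ α n - cfP α n * cfQ α (n + 1) = (-1) ^ (n + 1) := by
  induction n with
  | zero => simp [cfP, cfQ]
  | succ n ih =>
    simp only [cfQ, cfP]
    have : (-1 : ℤ) ^ (n + 2) = -(-1) ^ (n + 1) := by ring
    rw [this]
    linear_combination -ih

lemma denom_pos {α : ℝ} (hα : Irrational α) (n : ℕ) :
    0 < (cfQ α (n + 1) : ℝ) * cq α (n + 1) + cfQ α n := by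
  have h1 : (1 : ℝ) ≤ (cfQ α (n + 1) : ℝ) := by exact_mod_cast cfQ_pos hα n
  have h2 : (0 : ℝ) ≤ (cfQ α n : ℝ) := by exact_mod_cast cfQ_nonneg hα n
  nlinarith [one_lt_cq hα n]

lemma err_eq {α : ℝ} (hα : Irrational α) (n : ℕ) :
    (cfQ α (n + 1) : ℝ) * α - cfP α (n + 1) =
      (-1) ^ n / ((cfQ α (n + 1) : ℝ) * cq α (n + 1) + cfQ α n) := by
  have hd := denom_pos hα n
  have hdet : ((cfP α (n + 1) : ℝ) * cfQ α n - cfP α n * cfQ α (n + 1)) = (-1) ^ (n + 1) := by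
    have := cf_det (α := α) n
    push_cast [this]
    exact_mod_cast congrArg (Int.cast : ℤ → ℝ) this
  rw [eq_div_iff hd.ne']
  linear_combination (cfQ α (n + 1) : ℝ) * (cq_id hα n) - hdet

lemma err_abs {α : ℝ} (hα : Irrational α) (n : ℕ) :
    |(cfQ α (n + 1) : ℝ) * α - cfP α (n + 1)| =
      1 / ((cfQ α (n + 1) : ℝ) * cq α (n + 1) + cfQ α n) := by
  rw [err_eq hα n, abs_div, abs_pow, abs_neg, abs_one, one_pow,
    abs_of_pos (denom_pos hα n)]

lemma cfQ_succ_cast {α : ℝ} (n : ℕ) :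
    (cfQ α (n + 2) : ℝ) = (cfA α (n + 1) : ℝ) * cfQ α (n + 1) + cfQ α n := by
  simp only [cfQ]; push_cast; ring

lemma denom_gt {α : ℝ} (hα : Irrational α) (n : ℕ) :
    (cfQ α (n + 2) : ℝ) < (cfQ α (n + 1) : ℝ) * cq α (n + 1) + cfQ α n := by
  rw [cfQ_succ_cast]
  have h1 : (1 : ℝ) ≤ (cfQ α (n + 1) : ℝ) := by exact_mod_cast cfQ_pos hα n
  nlinarith [cfA_lt_cq hα (n + 1)]

lemma denom_lt {α : ℝ} (hα : Irrational α) (n : ℕ) :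
    (cfQ α (n + 1) : ℝ) * cq α (n + 1) + cfQ α n <
      (cfQ α (n + 2) : ℝ) + cfQ α (n + 1) := by
  rw [cfQ_succ_cast]
  have h1 : (1 : ℝ) ≤ (cfQ α (n + 1) : ℝ) := by exact_mod_cast cfQ_pos hα n
  nlinarith [cq_lt hα (n + 1)]

lemma err_lt {α : ℝ} (hα : Irrational α) (n : ℕ) :
    |(cfQ α (n + 1) : ℝ) * α - cfP α (n + 1)| < 1 / (cfQ α (n + 2) : ℝ) := by
  rw [err_abs hα n]
  have hQ : (0 : ℝ) < (cfQ α (n + 2) : ℝ) := by exact_mod_cast cfQ_pos hα (n + 1)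
  exact one_div_lt_one_div_of_lt hQ (denom_gt hα n)

lemma err_gt {α : ℝ} (hα : Irrational α) (n : ℕ) :
    1 / ((cfQ α (n + 2) : ℝ) + cfQ α (n + 1)) <
      |(cfQ α (n + 1) : ℝ) * α - cfP α (n + 1)| := by
  rw [err_abs hα n]
  exact one_div_lt_one_div_of_lt (denom_pos hα n) (denom_lt hα n)

lemma best_approx {α : ℝ} (hα : Irrational α) (n : ℕ) (m p : ℤ)
    (hm1 : 1 ≤ m) (hm2 : m < cfQ α (n + 2)) :
    |(cfQ α (n + 1) : ℝ) * α - cfP α (n + 1)| ≤ |(m : ℝ) * α - p| := by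
  set x : ℤ := (-1) ^ n * (m * cfP α (n + 2) - p * cfQ α (n + 2)) with hxdef
  set y : ℤ := (-1) ^ n * (p * cfQ α (n + 1) - m * cfP α (n + 1)) with hydef
  have h1 : ((-1 : ℤ)) ^ n * (-1) ^ n = 1 := by
    rw [← mul_pow]; norm_num
  have hxm : x * cfQ α (n + 1) + y * cfQ α (n + 2) = m := by
    rw [hxdef, hydef]
    linear_combination ((-1 : ℤ) ^ n * m) * cf_det (α := α) (n + 1) + m * h1
  have hxp : x * cfP α (n + 1) + y * cfP α (n + 2) = p := by
    rw [hxdef, hydef]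
    linear_combination ((-1 : ℤ) ^ n * p) * cf_det (α := α) (n + 1) + p * h1
  have hxmR : (x : ℝ) * cfQ α (n + 1) + y * cfQ α (n + 2) = m := by exact_mod_cast hxm
  have hxpR : (x : ℝ) * cfP α (n + 1) + y * cfP α (n + 2) = p := by exact_mod_cast hxp
  have hsum : (m : ℝ) * α - p =
      (x : ℝ) * ((cfQ α (n + 1) : ℝ) * α - cfP α (n + 1)) +
        (y : ℝ) * ((cfQ α (n + 2) : ℝ) * α - cfP α (n + 2)) := by
    linear_combination hxpR - α * hxmR
  have hQ1 : (1 : ℤ) ≤ cfQ α (n + 1) := cfQ_pos hα n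
  have hQ2 : (1 : ℤ) ≤ cfQ α (n + 2) := cfQ_pos hα (n + 1)
  by_cases hy : y = 0
  · -- m = x * Q(n+1), x ≥ 1
    have hx1 : 1 ≤ x := by nlinarith [hxm, hy]
    have hx1R : (1 : ℝ) ≤ (x : ℝ) := by exact_mod_cast hx1
    rw [hsum, hy]
    push_cast
    rw [zero_mul, add_zero, abs_mul]
    nlinarith [abs_nonneg ((cfQ α (n + 1) : ℝ) * α - cfP α (n + 1)),
      le_abs_self (x : ℝ), abs_nonneg (x:ℝ)]
  · by_cases hx : x = 0
    · exfalso
      rw [hx, zero_mul, zero_add] at hxm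
      have hy1 : 1 ≤ y := by nlinarith
      nlinarith
    · -- x and y are nonzero with opposite signs
      have hopp : (1 ≤ x ∧ y ≤ -1) ∨ (x ≤ -1 ∧ 1 ≤ y) := by
        rcases lt_or_gt_of_ne hx with hxneg | hxpos
        · refine Or.inr ⟨by omega, ?_⟩
          by_contra h
          have hy' : y ≤ -1 := by omega
          nlinarith
        · refine Or.inl ⟨by omega, ?_⟩
          by_contra h
          have hy' : 1 ≤ y := by omega
          nlinarith
      set d1 : ℝ := (cfQ α (n + 1) : ℝ) * cq α (n + 1) + cfQ α n with hd1
      set d2 : ℝ := (cfQ α (n + 2) : ℝ) * cq α (n + 2) + cfQ α (n + 1) with hd2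
      have hd1p : 0 < d1 := denom_pos hα n
      have hd2p : 0 < d2 := denom_pos hα (n + 1)
      have he1 : (cfQ α (n + 1) : ℝ) * α - cfP α (n + 1) = (-1) ^ n / d1 := err_eq hα n
      have he2 : (cfQ α (n + 2) : ℝ) * α - cfP α (n + 2) = (-1) ^ (n + 1) / d2 :=
        err_eq hα (n + 1)
      have hval : (m : ℝ) * α - p = (-1) ^ n * ((x : ℝ) / d1 - (y : ℝ) / d2) := by
        rw [hsum, he1, he2]; ring
      have habs : |(m : ℝ) * α - p| = |(x : ℝ) / d1 - (y : ℝ) / d2| := by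
        rw [hval, abs_mul, abs_pow, abs_neg, abs_one, one_pow, one_mul]
      rw [habs, err_abs hα n, ← hd1]
      rcases hopp with ⟨hx1, hy1⟩ | ⟨hx1, hy1⟩
      · have hx1R : (1 : ℝ) ≤ (x : ℝ) := by exact_mod_cast hx1
        have hy1R : (y : ℝ) ≤ -1 := by exact_mod_cast hy1
        have h2 : (y : ℝ) / d2 ≤ 0 := div_nonpos_of_nonpos_of_nonneg (by linarith) hd2p.le
        have h3 : 1 / d1 ≤ (x : ℝ) / d1 := by gcongr
        have := le_abs_self ((x : ℝ) / d1 - (y : ℝ) / d2)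
        linarith
      · have hx1R : (x : ℝ) ≤ -1 := by exact_mod_cast hx1
        have hy1R : (1 : ℝ) ≤ (y : ℝ) := by exact_mod_cast hy1
        have h2 : 0 ≤ (y : ℝ) / d2 := div_nonneg (by linarith) hd2p.le
        have h3 : (x : ℝ) / d1 ≤ -(1 / d1) := by
          rw [← neg_div]; gcongr
        have := neg_abs_le ((x : ℝ) / d1 - (y : ℝ) / d2)
        linarith

lemma exists_fit {β : ℝ} (hβ : Irrational β) (m : ℤ) (hm : 1 ≤ m) :
    ∃ n : ℕ, cfQ β (n + 1) ≤ m ∧ m < cfQ β (n + 2) := by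
  have hex : ∃ n : ℕ, m < cfQ β (n + 2) := by
    refine ⟨m.toNat, ?_⟩
    have h1 := cfQ_ge hβ (m.toNat + 1)
    rw [show m.toNat + 1 + 1 = m.toNat + 2 from rfl] at h1
    have h2 : m ≤ (m.toNat : ℤ) := Int.self_le_toNat m
    push_cast at h1
    omega
  classical
  refine ⟨Nat.find hex, ?_, Nat.find_spec hex⟩
  cases hfind : Nat.find hex with
  | zero => simpa [cfQ] using hm
  | succ k =>
    have hmin := Nat.find_min hex (m := k) (by omega)
    have heq : cfQ β (k + 1 + 1) = cfQ β (k + 2) := rfl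
    rw [heq]
    omega

lemma key_lower {β : ℝ} (hβ : Irrational β) (N : ℤ) (hN : ∀ n, cfA β (n + 1) ≤ N)
    (m : ℤ) (hm : 1 ≤ m) :
    1 / ((N : ℝ) + 2) ≤ (m : ℝ) * nearestDist ((m : ℝ) * β) := by
  obtain ⟨n, hn1, hn2⟩ := exists_fit hβ m hm
  have hba := best_approx hβ n m (round ((m : ℝ) * β)) hm hn2
  have hnd : nearestDist ((m : ℝ) * β) = |(m : ℝ) * β - round ((m : ℝ) * β)| := rfl
  have herr := err_gt hβ n
  -- denominators
  have hQ1 : (1 : ℝ) ≤ (cfQ β (n + 1) : ℝ) := by exact_mod_cast cfQ_pos hβ n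
  have hQ1m : (cfQ β (n + 1) : ℝ) ≤ (m : ℝ) := by exact_mod_cast hn1
  have hmR : (1 : ℝ) ≤ (m : ℝ) := by exact_mod_cast hm
  have hNR : (1 : ℝ) ≤ (N : ℝ) := by exact_mod_cast le_trans (one_le_cfA hβ 0) (hN 0)
  have hsum : (cfQ β (n + 2) : ℝ) + cfQ β (n + 1) ≤ ((N : ℝ) + 2) * (m : ℝ) := by
    rw [cfQ_succ_cast]
    have ha : (cfA β (n + 1) : ℝ) ≤ (N : ℝ) := by exact_mod_cast hN n
    have hmono : (cfQ β n : ℝ) ≤ (cfQ β (n + 1) : ℝ) := by exact_mod_cast cfQ_mono hβ n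
    have h0 : (0 : ℝ) ≤ (cfQ β n : ℝ) := by exact_mod_cast cfQ_nonneg hβ n
    nlinarith
  have hsum_pos : (0 : ℝ) < (cfQ β (n + 2) : ℝ) + cfQ β (n + 1) := by
    have : (1 : ℝ) ≤ (cfQ β (n + 2) : ℝ) := by exact_mod_cast cfQ_pos hβ (n + 1)
    linarith
  have h1 : 1 / (((N : ℝ) + 2) * (m : ℝ)) ≤ 1 / ((cfQ β (n + 2) : ℝ) + cfQ β (n + 1)) :=
    one_div_le_one_div_of_le hsum_pos hsum
  have h2 : 1 / (((N : ℝ) + 2) * (m : ℝ)) ≤ nearestDist ((m : ℝ) * β) := by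
    rw [hnd]; linarith
  have hNpos : (0 : ℝ) < (N : ℝ) + 2 := by linarith
  calc 1 / ((N : ℝ) + 2) = (m : ℝ) * (1 / (((N : ℝ) + 2) * (m : ℝ))) := by
        field_simp
      _ ≤ (m : ℝ) * nearestDist ((m : ℝ) * β) := by
        apply mul_le_mul_of_nonneg_left h2 (by linarith)

lemma key_upper {β : ℝ} (hβ : Irrational β) (n : ℕ) :
    (cfQ β (n + 1) : ℝ) * nearestDist ((cfQ β (n + 1) : ℝ) * β) ≤
      1 / (cfA β (n + 1) : ℝ) := by
  have hnd : nearestDist ((cfQ β (n + 1) : ℝ) * β) ≤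
      |(cfQ β (n + 1) : ℝ) * β - cfP β (n + 1)| := round_le _ _
  have herr := err_lt hβ n
  have hQ1 : (1 : ℝ) ≤ (cfQ β (n + 1) : ℝ) := by exact_mod_cast cfQ_pos hβ n
  have ha : (1 : ℝ) ≤ (cfA β (n + 1) : ℝ) := by exact_mod_cast one_le_cfA hβ n
  have hQ2 : (cfA β (n + 1) : ℝ) * (cfQ β (n + 1) : ℝ) ≤ (cfQ β (n + 2) : ℝ) := by
    rw [cfQ_succ_cast]
    have h0 : (0 : ℝ) ≤ (cfQ β n : ℝ) := by exact_mod_cast cfQ_nonneg hβ n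
    linarith
  have hQ2pos : (0 : ℝ) < (cfQ β (n + 2) : ℝ) := by exact_mod_cast cfQ_pos hβ (n + 1)
  have h3 : 1 / (cfQ β (n + 2) : ℝ) ≤ 1 / ((cfA β (n + 1) : ℝ) * (cfQ β (n + 1) : ℝ)) :=
    one_div_le_one_div_of_le (by nlinarith) hQ2
  have h4 : nearestDist ((cfQ β (n + 1) : ℝ) * β) ≤
      1 / ((cfA β (n + 1) : ℝ) * (cfQ β (n + 1) : ℝ)) := by linarith
  calc (cfQ β (n + 1) : ℝ) * nearestDist ((cfQ β (n + 1) : ℝ) * β) ≤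
      (cfQ β (n + 1) : ℝ) * (1 / ((cfA β (n + 1) : ℝ) * (cfQ β (n + 1) : ℝ))) :=
        mul_le_mul_of_nonneg_left h4 (by linarith)
    _ = 1 / (cfA β (n + 1) : ℝ) := by field_simp

lemma irr_shift {α : ℝ} (hα : Irrational α) (k : ℕ) : Irrational ((2 : ℝ) ^ k * α) := by
  have h := hα.natCast_mul (m := 2 ^ k) (by positivity)
  have h2 : ((2 ^ k : ℕ) : ℝ) = (2 : ℝ) ^ k := by push_cast; ring
  rwa [h2] at h

/-- For irrational `α`, `inf_{q ≥ 1} q ⬝ |q|₂ ⬝ ‖qα‖ > 0` iff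
`sup_{k ≥ 0} M(2^k α) < ∞`. -/
theorem stmt2 (α : ℝ) (hα : Irrational α) :
    (0 < ⨅ q : ℕ+, ((q : ℕ) : ℝ) * (2 : ℝ) ^ (-(padicValNat 2 (q : ℕ) : ℤ)) *
        nearestDist (((q : ℕ) : ℝ) * α)) ↔
      (⨆ k : ℕ, Mq ((2 : ℝ) ^ k * α)) < ⊤ := by
  haveI : Fact (Nat.Prime 2) := ⟨Nat.prime_two⟩
  set F : ℕ+ → ℝ := fun q => ((q : ℕ) : ℝ) * (2 : ℝ) ^ (-(padicValNat 2 (q : ℕ) : ℤ)) *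
    nearestDist (((q : ℕ) : ℝ) * α) with hF
  have hF0 : ∀ q : ℕ+, 0 ≤ F q := by
    intro q
    have h1 : 0 ≤ nearestDist (((q : ℕ) : ℝ) * α) := abs_nonneg _
    have h2 : (0 : ℝ) ≤ ((q : ℕ) : ℝ) * (2 : ℝ) ^ (-(padicValNat 2 (q : ℕ) : ℤ)) := by
      positivity
    exact mul_nonneg h2 h1
  have hbdd : BddBelow (Set.range F) := ⟨0, by rintro x ⟨q, rfl⟩; exact hF0 q⟩
  constructor
  · -- inf positive implies bounded partial quotients
    intro hc
    set c : ℝ := ⨅ q : ℕ+, F q with hcdef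
    have hkey : ∀ k n : ℕ, ((cfA ((2 : ℝ) ^ k * α) (n + 1)).toNat : ℝ) ≤ 1 / c := by
      intro k n
      set β : ℝ := (2 : ℝ) ^ k * α with hβdef
      have hβ : Irrational β := irr_shift hα k
      set a : ℤ := cfA β (n + 1) with hadef
      have ha1 : 1 ≤ a := one_le_cfA hβ n
      have ha1R : (1 : ℝ) ≤ (a : ℝ) := by exact_mod_cast ha1
      set Q : ℤ := cfQ β (n + 1) with hQdef
      have hQ1 : 1 ≤ Q := cfQ_pos hβ n
      set t : ℕ := Q.toNat with htdef
      have ht : (t : ℤ) = Q := Int.toNat_of_nonneg (by omega)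
      have ht1 : 1 ≤ t := by omega
      set q : ℕ+ := ⟨2 ^ k * t, by positivity⟩ with hqdef
      have hqval : (q : ℕ) = 2 ^ k * t := rfl
      have hcle : c ≤ F q := ciInf_le hbdd q
      -- the 2-adic valuation of q is at least k
      have hdvd : (2 : ℕ) ^ k ∣ (q : ℕ) := ⟨t, hqval⟩
      have hq0 : (q : ℕ) ≠ 0 := q.pos.ne'
      have hv : k ≤ padicValNat 2 (q : ℕ) := (padicValNat_dvd_iff_le hq0).mp hdvd
      have hvZ : (k : ℤ) ≤ (padicValNat 2 (q : ℕ) : ℤ) := by exact_mod_cast hv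
      have hpow : (2 : ℝ) ^ (-(padicValNat 2 (q : ℕ) : ℤ)) ≤ (2 : ℝ) ^ (-(k : ℤ)) :=
        zpow_le_zpow_right₀ (by norm_num) (neg_le_neg hvZ)
      have hqR : ((q : ℕ) : ℝ) = (2 : ℝ) ^ k * t := by rw [hqval]; push_cast; ring
      have hAB : ((q : ℕ) : ℝ) * (2 : ℝ) ^ (-(padicValNat 2 (q : ℕ) : ℤ)) ≤ (t : ℝ) := by
        have h2 : ((q : ℕ) : ℝ) * (2 : ℝ) ^ (-(k : ℤ)) = (t : ℝ) := by
          rw [hqR, zpow_neg, zpow_natCast]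
          field_simp
        calc ((q : ℕ) : ℝ) * (2 : ℝ) ^ (-(padicValNat 2 (q : ℕ) : ℤ)) ≤
            ((q : ℕ) : ℝ) * (2 : ℝ) ^ (-(k : ℤ)) := by
              apply mul_le_mul_of_nonneg_left hpow (by positivity)
          _ = (t : ℝ) := h2
      have harg : ((q : ℕ) : ℝ) * α = (Q : ℝ) * β := by
        rw [hqR, hβdef]
        have : ((t : ℕ) : ℝ) = (Q : ℝ) := by exact_mod_cast congrArg (Int.cast : ℤ → ℝ) ht
        rw [← this]; ring
      have hup := key_upper hβ n
      have hFq : F q ≤ 1 / (a : ℝ) := by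
        calc F q = ((q : ℕ) : ℝ) * (2 : ℝ) ^ (-(padicValNat 2 (q : ℕ) : ℤ)) *
              nearestDist (((q : ℕ) : ℝ) * α) := rfl
          _ ≤ (t : ℝ) * nearestDist (((q : ℕ) : ℝ) * α) :=
              mul_le_mul_of_nonneg_right hAB (abs_nonneg _)
          _ = (Q : ℝ) * nearestDist ((Q : ℝ) * β) := by
              rw [harg]
              congr 1
              exact_mod_cast congrArg (Int.cast : ℤ → ℝ) ht
          _ ≤ 1 / (a : ℝ) := hup
      have hca : c ≤ 1 / (a : ℝ) := le_trans hcle hFq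
      have haR : (a : ℝ) ≤ 1 / c := by
        rw [le_div_iff₀ hc]
        have h1 : (a : ℝ) * c ≤ (a : ℝ) * (1 / (a : ℝ)) :=
          mul_le_mul_of_nonneg_left hca (by linarith)
        rw [mul_one_div, div_self (by linarith : (a : ℝ) ≠ 0)] at h1
        exact h1
      have : ((a.toNat : ℤ) : ℝ) = (a : ℝ) := by
        exact_mod_cast congrArg (Int.cast : ℤ → ℝ) (Int.toNat_of_nonneg (by omega))
      push_cast at this ⊢
      linarith
    have hsup : (⨆ k : ℕ, Mq ((2 : ℝ) ^ k * α)) ≤ ((⌊1 / c⌋₊ : ℕ) : ℕ∞) := by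
      refine iSup_le fun k => ?_
      simp only [Mq]
      refine iSup_le fun n => ?_
      exact Nat.cast_le.mpr (Nat.le_floor (hkey k n))
    exact lt_of_le_of_lt hsup (WithTop.coe_lt_top _)
  · -- bounded partial quotients implies inf positive
    intro hfin
    obtain ⟨N, hNeq⟩ := WithTop.ne_top_iff_exists.mp hfin.ne
    have hbound : ∀ k n : ℕ, cfA ((2 : ℝ) ^ k * α) (n + 1) ≤ (N : ℤ) := by
      intro k n
      have h1 : (((cfA ((2 : ℝ) ^ k * α) (n + 1)).toNat : ℕ) : ℕ∞) ≤
          ⨆ k : ℕ, Mq ((2 : ℝ) ^ k * α) := by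
        refine le_trans ?_ (le_iSup (fun k => Mq ((2 : ℝ) ^ k * α)) k)
        simp only [Mq]
        exact le_iSup (fun n => (((cfA ((2 : ℝ) ^ k * α) (n + 1)).toNat : ℕ) : ℕ∞)) n
      rw [← hNeq] at h1
      have h2 : (cfA ((2 : ℝ) ^ k * α) (n + 1)).toNat ≤ N := by
        have h1' : (((cfA ((2 : ℝ) ^ k * α) (n + 1)).toNat : ℕ) : ℕ∞) ≤ ((N : ℕ) : ℕ∞) := h1
        exact_mod_cast h1'
      omega
    have hNpos : (0 : ℝ) < 1 / ((N : ℝ) + 2) := by positivity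
    refine lt_of_lt_of_le hNpos (le_ciInf fun q => ?_)
    set k : ℕ := padicValNat 2 (q : ℕ) with hkdef
    set t : ℕ := (q : ℕ) / 2 ^ k with htdef
    have hq0 : (q : ℕ) ≠ 0 := q.pos.ne'
    have hdvd : (2 : ℕ) ^ k ∣ (q : ℕ) := pow_padicValNat_dvd
    have hfac : 2 ^ k * t = (q : ℕ) := Nat.mul_div_cancel' hdvd
    have ht1 : 1 ≤ t := by
      rcases Nat.eq_zero_or_pos t with h | h
      · exfalso; rw [h, mul_zero] at hfac; exact hq0 hfac.symm
      · exact h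
    set β : ℝ := (2 : ℝ) ^ k * α with hβdef
    have hβ : Irrational β := irr_shift hα k
    have hkl := key_lower hβ (N : ℤ) (hbound k) (t : ℤ) (by exact_mod_cast ht1)
    have hqR : ((q : ℕ) : ℝ) = (2 : ℝ) ^ k * t := by
      rw [← hfac]; push_cast; ring
    have hcoef : ((q : ℕ) : ℝ) * (2 : ℝ) ^ (-(k : ℤ)) = (t : ℝ) := by
      rw [hqR, zpow_neg, zpow_natCast]; field_simp
    have harg : ((q : ℕ) : ℝ) * α = (t : ℝ) * β := by
      rw [hqR, hβdef]; ring
    calc 1 / ((N : ℝ) + 2) ≤ ((t : ℤ) : ℝ) * nearestDist (((t : ℤ) : ℝ) * β) := hkl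
      _ = ((q : ℕ) : ℝ) * (2 : ℝ) ^ (-(k : ℤ)) * nearestDist (((q : ℕ) : ℝ) * α) := by
          rw [hcoef, harg]; push_cast; ring_nf
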